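/- For any linear rank-metric code C ⊆ F_q^{m×n} (an F_q-linear subspace of m×n matrices over F_q) with minimum rank distance δ (i.e., every nonzero matrix in C has rank at least δ, and some nonzero matrix has rank exactly δ), the dimension k of C over F_q satisfies k ≤ max(m,n) · (min(m,n) − δ + 1). -/

import Mathlib

open Module

lemma rank_le_of_rows_zero {F : Type*} [Field F] {m n r : ℕ}
    (M : Matrix (Fin m) (Fin n) F) (h : ∀ i : Fin m, i.val < r → M i = 0) :
    M.rank ≤ m - r := by
  classical
  rw [Matrix.rank_eq_finrank_span_row]
  set s : Finset (Fin n → F) :=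
    (Finset.univ.filter (fun i : Fin m => r ≤ i.val)).image (fun i => M i) with hs
  have hsub : Set.range M ⊆ insert 0 (s : Set (Fin n → F)) := by
    rintro - ⟨i, rfl⟩
    by_cases hir : i.val < r
    · exact Or.inl (h i hir)
    · exact Or.inr (by simp [hs]; exact ⟨i, by omega, rfl⟩)
  have h1 : Submodule.span F (Set.range M) ≤ Submodule.span F (s : Set (Fin n → F)) := by
    calc Submodule.span F (Set.range M)
        ≤ Submodule.span F (insert 0 (s : Set (Fin n → F))) := Submodule.span_mono hsub
      _ = Submodule.span F (s : Set (Fin n → F)) := Submodule.span_insert_zero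
  have h2 : finrank F (Submodule.span F (Set.range M))
      ≤ finrank F (Submodule.span F (s : Set (Fin n → F))) := Submodule.finrank_mono h1
  refine h2.trans ((finrank_span_finset_le_card s).trans ?_)
  have : (Finset.univ.filter (fun i : Fin m => r ≤ i.val)).card ≤ m - r := by
    have : (Finset.univ.filter (fun i : Fin m => r ≤ i.val)) ⊆
        Finset.univ.image (fun k : Fin (m - r) => (⟨r + k.val, by omega⟩ : Fin m)) := by
      intro i hi
      simp at hi ⊢
      exact ⟨⟨i.val - r, by omega⟩, by ext; simp; omega⟩
    calc _ ≤ _ := Finset.card_le_card this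
      _ ≤ (Finset.univ : Finset (Fin (m - r))).card := Finset.card_image_le
      _ = m - r := by simp
  exact (Finset.card_image_le).trans this

lemma aux_bound {F : Type*} [Field F] {m n δ : ℕ}
    (C : Submodule F (Matrix (Fin m) (Fin n) F)) (hδ1 : 1 ≤ δ) (hδm : δ ≤ m)
    (hmin : ∀ A ∈ C, A ≠ 0 → δ ≤ A.rank) :
    Module.finrank F C ≤ (m - δ + 1) * n := by
  have hle : m - δ + 1 ≤ m := by omega
  let φ : Matrix (Fin m) (Fin n) F →ₗ[F] Matrix (Fin (m - δ + 1)) (Fin n) F :=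
    { toFun := fun M => M.submatrix (Fin.castLE hle) id
      map_add' := fun _ _ => rfl
      map_smul' := fun _ _ => rfl }
  have hinj : Function.Injective (φ.comp C.subtype) := by
    rw [← LinearMap.ker_eq_bot, LinearMap.ker_eq_bot']
    rintro ⟨M, hM⟩ h0
    have hrows : ∀ i : Fin m, i.val < m - δ + 1 → M i = 0 := by
      intro i hi
      funext j
      have := congrFun (congrFun h0 (⟨i.val, hi⟩ : Fin (m - δ + 1))) j
      simpa [φ, Matrix.submatrix] using this
    have hrank : M.rank ≤ m - (m - δ + 1) := rank_le_of_rows_zero M hrows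
    by_contra hne
    have hMne : M ≠ 0 := by
      intro h; exact hne (Subtype.ext h)
    have := hmin M hM hMne
    omega
  have := LinearMap.finrank_le_finrank_of_injective hinj
  calc Module.finrank F C ≤ Module.finrank F (Matrix (Fin (m - δ + 1)) (Fin n) F) := this
    _ = (m - δ + 1) * n := by
        rw [Module.finrank_matrix]
        simp

/-- Singleton-like bound for linear rank-metric codes. -/
theorem stmt0 {F : Type*} [Field F] [Fintype F] {m n δ : ℕ}
    (C : Submodule F (Matrix (Fin m) (Fin n) F))
    (hmin : ∀ A ∈ C, A ≠ 0 → δ ≤ A.rank)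
    (hex : ∃ A ∈ C, A ≠ 0 ∧ A.rank = δ) :
    Module.finrank F C ≤ max m n * (min m n - δ + 1) := by
  obtain ⟨A, hAC, hA0, hAr⟩ := hex
  have hδ1 : 1 ≤ δ := by
    rcases Nat.eq_zero_or_pos δ with h | h
    · exfalso
      apply hA0
      have h0 : A.rank = 0 := by omega
      rw [Matrix.rank_eq_finrank_span_row] at h0
      haveI : FiniteDimensional F (Submodule.span F (Set.range A)) :=
        FiniteDimensional.span_of_finite F (Set.finite_range A)
      have hb := Submodule.finrank_eq_zero.mp h0
      ext i j
      have hmem : A i ∈ Submodule.span F (Set.range A) :=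
        Submodule.subset_span ⟨i, rfl⟩
      rw [show Submodule.span F (Set.range A) = ⊥ from hb, Submodule.mem_bot] at hmem
      simp [hmem]
    · exact h
  have hδm : δ ≤ m := hAr ▸ (A.rank_le_card_height.trans (by simp))
  have hδn : δ ≤ n := hAr ▸ (A.rank_le_card_width.trans (by simp))
  rcases le_total m n with hmn | hnm
  · have := aux_bound C hδ1 hδm hmin
    rw [Nat.max_eq_right hmn, Nat.min_eq_left hmn, mul_comm]
    exact this
  · let e := Matrix.transposeLinearEquiv (Fin m) (Fin n) F F
    let C' := C.map e.toLinearMap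
    have hmin' : ∀ A' ∈ C', A' ≠ 0 → δ ≤ A'.rank := by
      rintro A' hA' hA'0
      obtain ⟨B, hB, rfl⟩ := hA'
      have hr : (e.toLinearMap B).rank = B.rank := by
        show (Matrix.transpose B).rank = B.rank
        exact Matrix.rank_transpose B
      rw [hr]
      refine hmin B hB (fun h => hA'0 ?_)
      show Matrix.transpose B = 0
      simp [h]
    have heq : Module.finrank F C = Module.finrank F C' :=
      (LinearEquiv.finrank_map_eq e C).symm
    have := aux_bound C' hδ1 hδn hmin'
    rw [Nat.max_eq_left hnm, Nat.min_eq_right hnm, heq]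
    rw [mul_comm] at this
    exact this
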